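/- In the recursive Gaussian variance estimation process with known mean, for every integer T ≥ 1 the population risk satisfies E[(σ̂_T² − σ²)²] = ((1 + 2/n)^T − 1)·σ⁴; consequently, for every fixed n ≥ 2, E[(σ̂_T² − σ²)²] → ∞ as T → ∞. -/

import Mathlib

open MeasureTheory ProbabilityTheory Filter

/-- The chi-squared distribution with `k` degrees of freedom, as the Gamma
distribution with shape `k/2` and rate `1/2`. -/
noncomputable def chiSquared (k : ℝ) : Measure ℝ := gammaMeasure (k / 2) (1 / 2)


section Aux
open Real Set

lemma aux_pdf_int {a r : ℝ} (ha : 0 < a) (hr : 0 < r) (k : ℕ) :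
    Integrable (fun x => gammaPDFReal a r x * x ^ k) (volume : Measure ℝ) ∧
    ∫ x, gammaPDFReal a r x * x ^ k = Gamma (a + k) / (Gamma a * r ^ k) := by
  have hak : (0:ℝ) < a + k := by positivity
  set c : ℝ := r ^ a / Gamma a with hc
  have hkey : ∀ x ∈ Ioi (0:ℝ), gammaPDFReal a r x * x ^ k
      = c * (x ^ (a + k - 1) * exp (-(r * x))) := by
    intro x hx
    have hx' : (0:ℝ) < x := hx
    rw [gammaPDFReal, if_pos hx'.le]
    rw [show x ^ (a + k - 1) = x ^ (a - 1) * x ^ (k:ℝ) by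
      rw [← rpow_add hx']; ring_nf]
    rw [rpow_natCast]
    ring
  have hIoi : IntegrableOn (fun x => x ^ (a + k - 1) * exp (-(r * x))) (Ioi 0) := by
    have := integrableOn_rpow_mul_exp_neg_mul_rpow (s := a + k - 1) (p := 1)
      (by linarith) one_pos hr
    simpa [rpow_one, neg_mul] using this
  have hIoi' : IntegrableOn (fun x => gammaPDFReal a r x * x ^ k) (Ioi 0) := by
    have h2 : IntegrableOn (fun x => c * (x ^ (a + ↑k - 1) * exp (-(r * x)))) (Ioi 0) :=
      hIoi.const_mul c
    exact h2.congr_fun (fun x hx => (hkey x hx).symm) measurableSet_Ioi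
  have hIio : IntegrableOn (fun x => gammaPDFReal a r x * x ^ k) (Iio 0) := by
    refine (integrableOn_zero).congr_fun (fun x hx => ?_) measurableSet_Iio
    rw [gammaPDFReal, if_neg (not_le.mpr hx), zero_mul]
  have hInt : Integrable (fun x => gammaPDFReal a r x * x ^ k) (volume : Measure ℝ) := by
    rw [← integrableOn_univ, ← Iio_union_Ici (a := (0:ℝ))]
    exact hIio.union ((integrableOn_Ici_iff_integrableOn_Ioi).mpr hIoi')
  refine ⟨hInt, ?_⟩
  have hsplit : ∫ x, gammaPDFReal a r x * x ^ k
      = (∫ x in Iio 0, gammaPDFReal a r x * x ^ k) + ∫ x in Ici 0, gammaPDFReal a r x * x ^ k := by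
    rw [← setIntegral_univ (μ := volume), ← Iio_union_Ici (a := (0:ℝ)),
      setIntegral_union (Iio_disjoint_Ici le_rfl) measurableSet_Ici hIio
      ((integrableOn_Ici_iff_integrableOn_Ioi).mpr hIoi')]
  rw [hsplit, integral_Ici_eq_integral_Ioi]
  have h1 : ∫ x in Iio 0, gammaPDFReal a r x * x ^ k = 0 := by
    rw [setIntegral_congr_fun measurableSet_Iio
      (fun x hx => by rw [gammaPDFReal, if_neg (not_le.mpr hx), zero_mul] : EqOn _ (fun _ => (0:ℝ)) _)]
    simp
  rw [h1, zero_add, setIntegral_congr_fun measurableSet_Ioi hkey, integral_const_mul,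
    integral_rpow_mul_exp_neg_mul_Ioi hak hr]
  have hΓ : Gamma a ≠ 0 := (Gamma_pos_of_pos ha).ne'
  have hra : r ^ a ≠ 0 := (rpow_pos_of_pos hr a).ne'
  have hrk : (r:ℝ) ^ k ≠ 0 := pow_ne_zero _ hr.ne'
  rw [div_rpow zero_le_one hr.le, one_rpow, rpow_add hr, rpow_natCast]
  rw [hc]
  field_simp

lemma gamma_meas_pdf (a r : ℝ) :
    gammaMeasure a r
      = volume.withDensity (fun x => ((gammaPDFReal a r x).toNNReal : ENNReal)) := rfl

lemma integrable_pow_gamma {a r : ℝ} (ha : 0 < a) (hr : 0 < r) (k : ℕ) :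
    Integrable (fun x => x ^ k) (gammaMeasure a r) := by
  have hmeas : Measurable (gammaPDF a r) := (measurable_gammaPDFReal a r).ennreal_ofReal
  rw [gammaMeasure, integrable_withDensity_iff hmeas
    (ae_of_all _ fun x => by rw [gammaPDF_eq]; exact ENNReal.ofReal_lt_top)]
  refine ((aux_pdf_int ha hr k).1).congr ?_
  refine ae_of_all _ fun x => ?_
  show gammaPDFReal a r x * x ^ k = x ^ k * (ENNReal.ofReal (gammaPDFReal a r x)).toReal
  rw [ENNReal.toReal_ofReal (gammaPDFReal_nonneg ha hr x), mul_comm]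

lemma integral_pow_gamma {a r : ℝ} (ha : 0 < a) (hr : 0 < r) (k : ℕ) :
    ∫ x, x ^ k ∂(gammaMeasure a r) = Gamma (a + k) / (Gamma a * r ^ k) := by
  rw [gamma_meas_pdf, integral_withDensity_eq_integral_smul
    ((measurable_gammaPDFReal a r).real_toNNReal) (fun x => x ^ k)]
  rw [← (aux_pdf_int ha hr k).2]
  congr 1
  funext x
  rw [NNReal.smul_def, Real.coe_toNNReal _ (gammaPDFReal_nonneg ha hr x), smul_eq_mul]

lemma chi_int {n : ℕ} (hn : 0 < n) (k : ℕ) :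
    Integrable (fun x => x ^ k) (chiSquared n) :=
  integrable_pow_gamma (by positivity) (by norm_num) k

lemma chi_m1 {n : ℕ} (hn : 0 < n) : ∫ x, x ^ 1 ∂(chiSquared n) = n := by
  have h2 : ((n:ℝ)/2) ≠ 0 := by positivity
  rw [chiSquared, integral_pow_gamma (by positivity) (by norm_num)]
  push_cast
  rw [Gamma_add_one h2]
  have hΓ : Gamma ((n:ℝ)/2) ≠ 0 := (Gamma_pos_of_pos (by positivity)).ne'
  field_simp

lemma chi_m2 {n : ℕ} (hn : 0 < n) : ∫ x, x ^ 2 ∂(chiSquared n) = n * (n + 2) := by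
  have h2 : ((n:ℝ)/2) ≠ 0 := by positivity
  have h3 : ((n:ℝ)/2 + 1) ≠ 0 := by positivity
  rw [chiSquared, integral_pow_gamma (by positivity) (by norm_num)]
  push_cast
  rw [show (n:ℝ)/2 + 2 = ((n:ℝ)/2 + 1) + 1 by ring, Gamma_add_one h3, Gamma_add_one h2]
  have hΓ : Gamma ((n:ℝ)/2) ≠ 0 := (Gamma_pos_of_pos (by positivity)).ne'
  field_simp

lemma C_moment {Ω : Type} [MeasurableSpace Ω] (μ : Measure Ω) {n : ℕ} (hn : 0 < n)
    {X : Ω → ℝ} (hX : Measurable X)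
    (hlaw : Measure.map (fun ω => (n : ℝ) * X ω) μ = chiSquared n) (k : ℕ) :
    Integrable (fun ω => X ω ^ k) μ ∧
      ∫ ω, X ω ^ k ∂μ = (∫ x, x ^ k ∂(chiSquared n)) / n ^ k := by
  have hnR : ((n:ℝ)) ≠ 0 := by positivity
  have hnk : ((n:ℝ) ^ k) ≠ 0 := by positivity
  have hmeas : Measurable (fun ω => (n : ℝ) * X ω) := hX.const_mul _
  have hg : AEStronglyMeasurable (fun x : ℝ => x ^ k)
      (Measure.map (fun ω => (n : ℝ) * X ω) μ) :=
    (measurable_id.pow_const k).aestronglyMeasurable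
  have h1 : Integrable (fun ω => ((n : ℝ) * X ω) ^ k) μ := by
    have := (integrable_map_measure hg hmeas.aemeasurable).mp (by rw [hlaw]; exact chi_int hn k)
    exact this
  have h2 : ∫ ω, ((n : ℝ) * X ω) ^ k ∂μ = ∫ x, x ^ k ∂(chiSquared n) := by
    rw [← hlaw, integral_map hmeas.aemeasurable hg]
  constructor
  · have := h1.const_mul (((n:ℝ) ^ k)⁻¹)
    refine this.congr (ae_of_all _ fun ω => ?_)
    show ((n:ℝ) ^ k)⁻¹ * ((n:ℝ) * X ω) ^ k = X ω ^ k
    rw [mul_pow, ← mul_assoc, inv_mul_cancel₀ hnk, one_mul]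
  · have : ∫ ω, X ω ^ k ∂μ = ∫ ω, ((n:ℝ) ^ k)⁻¹ * ((n : ℝ) * X ω) ^ k ∂μ := by
      congr 1; funext ω; rw [mul_pow, ← mul_assoc, inv_mul_cancel₀ hnk, one_mul]
    rw [this, integral_const_mul, h2, div_eq_inv_mul]

end Aux

/-- In the recursive Gaussian variance estimation process with known mean
(modelled by `σ̂₀² = σ²` and `σ̂_{t+1}² = σ̂_t² · C_{t+1}` with `C₁, C₂, …` i.i.d. and
`n · C_t ~ χ²(n)`), for every `T ≥ 1` the population risk satisfies
`E[(σ̂_T² − σ²)²] = ((1 + 2/n)^T − 1) σ⁴`, and hence diverges as `T → ∞` for fixed `n ≥ 2`. -/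
theorem stmt_0
    {Ω : Type} [MeasurableSpace Ω] (μ : Measure Ω) [IsProbabilityMeasure μ]
    (n : ℕ) (hn : 2 ≤ n) (σ2 : ℝ) (hσ2 : 0 < σ2)
    (C : ℕ → Ω → ℝ) (hCmeas : ∀ t, Measurable (C t))
    (hiid : iIndepFun C μ)
    (hlaw : ∀ t, Measure.map (fun ω => (n : ℝ) * C t ω) μ = chiSquared n)
    (sigma2hat : ℕ → Ω → ℝ)
    (h0 : ∀ ω, sigma2hat 0 ω = σ2)
    (hrec : ∀ t ω, sigma2hat (t + 1) ω = sigma2hat t ω * C (t + 1) ω) :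
    (∀ T : ℕ, 1 ≤ T →
      ∫ ω, (sigma2hat T ω - σ2) ^ 2 ∂μ = ((1 + 2 / (n : ℝ)) ^ T - 1) * σ2 ^ 2) ∧
    Tendsto (fun T : ℕ => ∫ ω, (sigma2hat T ω - σ2) ^ 2 ∂μ) atTop atTop := by
  have hn0 : 0 < n := by omega
  have hnR : (0:ℝ) < n := by exact_mod_cast hn0
  -- moments of each C t
  have hCm1 : ∀ t, Integrable (C t) μ ∧ ∫ ω, C t ω ∂μ = 1 := by
    intro t
    obtain ⟨hi, he⟩ := C_moment μ hn0 (hCmeas t) (hlaw t) 1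
    rw [chi_m1 hn0] at he
    simp only [pow_one] at hi he
    refine ⟨hi, ?_⟩
    rw [he]
    field_simp
  have hCm2 : ∀ t, Integrable (fun ω => C t ω ^ 2) μ ∧
      ∫ ω, C t ω ^ 2 ∂μ = 1 + 2 / (n:ℝ) := by
    intro t
    obtain ⟨hi, he⟩ := C_moment μ hn0 (hCmeas t) (hlaw t) 2
    refine ⟨hi, ?_⟩
    rw [he, chi_m2 hn0]
    field_simp
  -- the product process
  set P : ℕ → Ω → ℝ := fun T ω => ∏ i ∈ Finset.range T, C (i + 1) ω with hPdef
  have hsig : ∀ T ω, sigma2hat T ω = σ2 * P T ω := by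
    intro T
    induction T with
    | zero => intro ω; simp [hPdef, h0]
    | succ T ih =>
      intro ω
      rw [hrec T ω, ih ω, hPdef]
      simp only [Finset.prod_range_succ]
      ring
  -- independence of P T and C (T+1)
  have hindep : ∀ T, IndepFun (P T) (C (T + 1)) μ := by
    intro T
    have hs : (T + 1) ∉ (Finset.range T).image (· + 1) := by
      simp only [Finset.mem_image, Finset.mem_range]
      rintro ⟨a, ha, h⟩; omega
    have h := hiid.indepFun_finsetProd_of_notMem hCmeas hs
    have hPeq : P T = ∏ j ∈ (Finset.range T).image (· + 1), C j := by
      rw [Finset.prod_image (fun a _ b _ h => by omega)]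
      funext ω
      rw [hPdef]
      simp [Finset.prod_apply]
    rwa [← hPeq] at h
  have hPmeas : ∀ T, Measurable (P T) :=
    fun T => Finset.measurable_prod _ (fun i _ => hCmeas (i + 1))
  -- moments of P T by induction
  have hkey : ∀ T, Integrable (P T) μ ∧ Integrable (fun ω => P T ω ^ 2) μ ∧
      ∫ ω, P T ω ∂μ = 1 ∧ ∫ ω, P T ω ^ 2 ∂μ = (1 + 2 / (n:ℝ)) ^ T := by
    intro T
    induction T with
    | zero =>
      have h1 : P 0 = fun _ => (1:ℝ) := by funext ω; simp [hPdef]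
      rw [h1]
      simp
    | succ T ih =>
      obtain ⟨hi1, hi2, he1, he2⟩ := ih
      have hPsucc : P (T + 1) = fun ω => P T ω * C (T + 1) ω := by
        funext ω; rw [hPdef]; simp [Finset.prod_range_succ]
      have hind := hindep T
      have hind2 : IndepFun (fun ω => P T ω ^ 2) (fun ω => C (T + 1) ω ^ 2) μ :=
        hind.comp (measurable_id.pow_const 2) (measurable_id.pow_const 2)
      have hCi := (hCm1 (T + 1)).1
      have hCi2 := (hCm2 (T + 1)).1
      refine ⟨?_, ?_, ?_, ?_⟩
      · rw [hPsucc]; exact hind.integrable_mul hi1 hCi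
      · have : (fun ω => P (T + 1) ω ^ 2) = fun ω => P T ω ^ 2 * C (T + 1) ω ^ 2 := by
          funext ω; rw [hPsucc]; ring
        rw [this]
        exact hind2.integrable_mul hi2 hCi2
      · rw [hPsucc]
        rw [show ∫ ω, P T ω * C (T + 1) ω ∂μ = ∫ ω, (P T * C (T + 1)) ω ∂μ from rfl]
        rw [hind.integral_mul_eq_mul_integral hi1.aestronglyMeasurable hCi.aestronglyMeasurable, he1, (hCm1 (T + 1)).2, one_mul]
      · have h3 : (fun ω => P (T + 1) ω ^ 2) = fun ω => P T ω ^ 2 * C (T + 1) ω ^ 2 := by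
          funext ω; rw [hPsucc]; ring
        simp only [h3]
        rw [show ∫ ω, P T ω ^ 2 * C (T + 1) ω ^ 2 ∂μ
            = ∫ ω, ((fun ω => P T ω ^ 2) * (fun ω => C (T + 1) ω ^ 2)) ω ∂μ from rfl]
        rw [hind2.integral_mul_eq_mul_integral hi2.aestronglyMeasurable hCi2.aestronglyMeasurable, he2, (hCm2 (T + 1)).2, pow_succ]
  -- the closed-form risk
  have hform : ∀ T : ℕ, ∫ ω, (sigma2hat T ω - σ2) ^ 2 ∂μ
      = ((1 + 2 / (n : ℝ)) ^ T - 1) * σ2 ^ 2 := by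
    intro T
    obtain ⟨hi1, hi2, he1, he2⟩ := hkey T
    have hrw : (fun ω => (sigma2hat T ω - σ2) ^ 2)
        = fun ω => σ2 ^ 2 * P T ω ^ 2 - 2 * σ2 ^ 2 * P T ω + σ2 ^ 2 := by
      funext ω; rw [hsig T ω]; ring
    have ia : Integrable (fun ω => σ2 ^ 2 * P T ω ^ 2 - 2 * σ2 ^ 2 * P T ω) μ :=
      (hi2.const_mul _).sub (hi1.const_mul _)
    rw [hrw, integral_add ia (integrable_const _),
      integral_sub (hi2.const_mul _) (hi1.const_mul _), integral_const_mul, integral_const_mul,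
      he1, he2, integral_const, probReal_univ]
    simp
    ring
  refine ⟨fun T _ => hform T, ?_⟩
  simp only [hform]
  have h1 : (1:ℝ) < 1 + 2 / n := by
    have : (0:ℝ) < 2 / n := by positivity
    linarith
  have h2 : Tendsto (fun T : ℕ => (1 + 2 / (n:ℝ)) ^ T) atTop atTop :=
    tendsto_pow_atTop_atTop_of_one_lt h1
  have h3 : Tendsto (fun T : ℕ => (1 + 2 / (n:ℝ)) ^ T - 1) atTop atTop :=
    tendsto_atTop_add_const_right atTop (-1) h2
  exact h3.atTop_mul_const (by positivity)
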